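/- Let c, s ∈ ℝ^N and let ψ = (1/2)·atan2(2⟪c, s⟫, ‖c‖² − ‖s‖²). Define a = cos(ψ)•c + sin(ψ)•s and b = −sin(ψ)•c + cos(ψ)•s. Then ⟪a, b⟫ = 0 and ‖a‖ ≥ ‖b‖; i.e., the rotation with ψ chosen via the two-argument arctangent always yields orthogonal axes with a the major axis. -/

import Mathlib

open RealInnerProductSpace

theorem atan2_phase_gives_major_axis (N : ℕ) (hN : 0 < N)
    (c s : EuclideanSpace ℝ (Fin N))
    (ψ : ℝ)
    (hψ : ψ = (1/2) * Complex.arg (((‖c‖^2 - ‖s‖^2 : ℝ) : ℂ) + ((2 * ⟪c, s⟫ : ℝ) : ℂ) * Complex.I))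
    (a b : EuclideanSpace ℝ (Fin N))
    (ha : a = Real.cos ψ • c + Real.sin ψ • s)
    (hb : b = -Real.sin ψ • c + Real.cos ψ • s) :
    ⟪a, b⟫ = 0 ∧ ‖a‖ ≥ ‖b‖ := by
  set z : ℂ := (((‖c‖^2 - ‖s‖^2 : ℝ) : ℂ) + ((2 * ⟪c, s⟫ : ℝ) : ℂ) * Complex.I) with hz
  have hre : z.re = ‖c‖^2 - ‖s‖^2 := by
    simp only [hz, Complex.add_re, Complex.ofReal_re, Complex.mul_re, Complex.I_re,
      Complex.I_im, Complex.ofReal_im]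
    ring
  have him : z.im = 2 * ⟪c, s⟫ := by
    simp only [hz, Complex.add_im, Complex.ofReal_im, Complex.mul_im, Complex.I_re,
      Complex.I_im, Complex.ofReal_re]
    ring
  set r : ℝ := ‖z‖ with hrdef
  have hr0 : 0 ≤ r := norm_nonneg z
  have h2ψ : 2 * ψ = Complex.arg z := by rw [hψ]; ring
  have hcos : r * Real.cos (2 * ψ) = ‖c‖^2 - ‖s‖^2 := by
    rw [h2ψ, hrdef, Complex.norm_mul_cos_arg, hre]
  have hsin : r * Real.sin (2 * ψ) = 2 * ⟪c, s⟫ := by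
    rw [h2ψ, hrdef, Complex.norm_mul_sin_arg, him]
  have hS : Real.sin (2 * ψ) = 2 * Real.sin ψ * Real.cos ψ := Real.sin_two_mul ψ
  have hC : Real.cos (2 * ψ) = Real.cos ψ ^ 2 - Real.sin ψ ^ 2 := by
    rw [Real.cos_two_mul]
    nlinarith [Real.sin_sq_add_cos_sq ψ]
  have hpy : Real.sin (2*ψ) ^ 2 + Real.cos (2*ψ) ^ 2 = 1 := Real.sin_sq_add_cos_sq _
  have hab : ⟪a, b⟫ = -(Real.cos ψ * Real.sin ψ) * ‖c‖^2
      + (Real.cos ψ ^ 2 - Real.sin ψ ^ 2) * ⟪c, s⟫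
      + Real.sin ψ * Real.cos ψ * ‖s‖^2 := by
    rw [ha, hb]
    simp only [inner_add_left, inner_add_right, real_inner_smul_left, real_inner_smul_right,
      real_inner_comm s c, real_inner_self_eq_norm_sq, inner_neg_left, inner_neg_right,
      neg_smul, smul_smul]
    ring
  have haa : ‖a‖^2 = Real.cos ψ ^ 2 * ‖c‖^2 + 2 * (Real.sin ψ * Real.cos ψ) * ⟪c, s⟫
      + Real.sin ψ ^ 2 * ‖s‖^2 := by
    rw [← real_inner_self_eq_norm_sq, ha]
    simp only [inner_add_left, inner_add_right, real_inner_smul_left, real_inner_smul_right,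
      real_inner_comm s c, real_inner_self_eq_norm_sq, inner_neg_left, inner_neg_right,
      neg_smul, smul_smul, norm_smul, mul_pow, Real.norm_eq_abs, sq_abs]
    ring
  have hbb : ‖b‖^2 = Real.sin ψ ^ 2 * ‖c‖^2 - 2 * (Real.sin ψ * Real.cos ψ) * ⟪c, s⟫
      + Real.cos ψ ^ 2 * ‖s‖^2 := by
    rw [← real_inner_self_eq_norm_sq, hb]
    simp only [inner_add_left, inner_add_right, real_inner_smul_left, real_inner_smul_right,
      real_inner_comm s c, real_inner_self_eq_norm_sq, inner_neg_left, inner_neg_right,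
      neg_smul, smul_smul, norm_smul, mul_pow, Real.norm_eq_abs, sq_abs]
    ring
  constructor
  · rw [hab]
    linear_combination ((‖c‖^2 - ‖s‖^2)/2) * hS - (⟪c, s⟫ : ℝ) * hC
      + (Real.sin (2*ψ)/2) * hcos - (Real.cos (2*ψ)/2) * hsin
  · have hdiff : ‖a‖^2 - ‖b‖^2 = r := by
      rw [haa, hbb]
      linear_combination (-(‖c‖^2 - ‖s‖^2)) * hC - 2 * (⟪c, s⟫ : ℝ) * hS
        - Real.cos (2*ψ) * hcos - Real.sin (2*ψ) * hsin + r * hpy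
    nlinarith [norm_nonneg a, norm_nonneg b, hr0, hdiff]
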